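/- arXiv:2505.23142 — 2 statements merged into one kernel-verified Lean document; each statement's English description precedes it below -/
import Mathlib

section
/- Let m ≥ 2, H ≤ Sym(m), and let G be a closed, self-similar, level-transitive subgroup of the iterated wreath product W_H with positive Hausdorff dimension in W_H. Then the center of G is trivial. Consequently, a profinite group with non-trivial center admits no faithful action on a regular rooted tree as a closed, self-similar, level-transitive group of positive Hausdorff dimension. -/
open Filter Topology

/-- Vertices of the `m`-adic rooted tree: finite words over an alphabet of size `m`. -/
abbrev Vtx (m : ℕ) := List (Fin m)

/-- The iterated wreath product `W_H ≤ Aut T`: permutations `f` of the vertex set that fix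
the root and such that at every vertex `v` there is a local permutation `σ ∈ H` with
`f (v ++ [x]) = f v ++ [σ x]` for every letter `x`.  (This encodes exactly the automorphisms
of the `m`-adic tree whose local permutation at every vertex lies in `H`.) -/
def wreath (m : ℕ) (H : Subgroup (Equiv.Perm (Fin m))) : Subgroup (Equiv.Perm (Vtx m)) where
  carrier := {f | f [] = [] ∧
    ∀ v : Vtx m, ∃ σ ∈ H, ∀ x : Fin m, f (v ++ [x]) = f v ++ [σ x]}
  one_mem' := ⟨rfl, fun _ => ⟨1, H.one_mem, fun _ => rfl⟩⟩
  mul_mem' := by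
    rintro f g ⟨hf0, hf⟩ ⟨hg0, hg⟩
    refine ⟨?_, fun v => ?_⟩
    · show f (g []) = []
      rw [hg0, hf0]
    · obtain ⟨τ, hτ, hτ'⟩ := hg v
      obtain ⟨σ, hσ, hσ'⟩ := hf (g v)
      refine ⟨σ * τ, H.mul_mem hσ hτ, fun x => ?_⟩
      show f (g (v ++ [x])) = f (g v) ++ [σ (τ x)]
      rw [hτ' x, hσ' (τ x)]
  inv_mem' := by
    rintro f ⟨hf0, hf⟩
    refine ⟨?_, fun v => ?_⟩
    · calc (f⁻¹ : Equiv.Perm (Vtx m)) [] = f⁻¹ (f []) := by rw [hf0]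
        _ = [] := Equiv.symm_apply_apply f []
    · obtain ⟨σ, hσ, hσ'⟩ := hf (f⁻¹ v)
      refine ⟨σ⁻¹, H.inv_mem hσ, fun x => ?_⟩
      apply Equiv.injective f
      rw [(show ∀ {α : Type} (e : Equiv.Perm α) (y : α), e (e⁻¹ y) = y from fun e y => e.apply_symm_apply y), hσ' (σ⁻¹ x), (show ∀ {α : Type} (e : Equiv.Perm α) (y : α), e (e⁻¹ y) = y from fun e y => e.apply_symm_apply y),
        (show ∀ {α : Type} (e : Equiv.Perm α) (y : α), e (e⁻¹ y) = y from fun e y => e.apply_symm_apply y)]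

/-- The pointwise stabilizer (in the full permutation group of the vertex set)
of the vertices of the first `n` levels of the tree. -/
def levelStab (m n : ℕ) : Subgroup (Equiv.Perm (Vtx m)) :=
  ⨅ v ∈ {v : Vtx m | v.length ≤ n}, MulAction.stabilizer (Equiv.Perm (Vtx m)) v

/-- The Hausdorff dimension of `X` in `G` with respect to the level-stabilizer filtration:
`hdimIn m G X = liminf_n log|X : St_X(n)| / log|G : St_G(n)|`. -/
noncomputable def hdimIn (m : ℕ) (G X : Subgroup (Equiv.Perm (Vtx m))) : ℝ :=
  Filter.liminf (fun n : ℕ =>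
    Real.log ((levelStab m n).relIndex X) / Real.log ((levelStab m n).relIndex G)) Filter.atTop

/-- `X` has strong Hausdorff dimension `α` in `G` if the sequence
`log|X : St_X(n)| / log|G : St_G(n)|` converges to `α` (a proper limit). -/
def hasStrongHdim (m : ℕ) (G X : Subgroup (Equiv.Perm (Vtx m))) (α : ℝ) : Prop :=
  Filter.Tendsto (fun n : ℕ =>
    Real.log ((levelStab m n).relIndex X) / Real.log ((levelStab m n).relIndex G))
    Filter.atTop (nhds α)

/-- The closure of a subgroup of `Aut T` in the profinite (congruence) topology:
`cl(G) = ⋂_n G · St(n)`. -/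
def treeClosure (m : ℕ) (G : Subgroup (Equiv.Perm (Vtx m))) : Subgroup (Equiv.Perm (Vtx m)) :=
  ⨅ n : ℕ, G ⊔ levelStab m n

/-- A subgroup of `Aut T` is closed (in the profinite topology) iff it equals its closure. -/
def IsTreeClosed (m : ℕ) (G : Subgroup (Equiv.Perm (Vtx m))) : Prop :=
  treeClosure m G = G

/-- `G` acts transitively on every level of the tree. -/
def LevelTransitive (m : ℕ) (G : Subgroup (Equiv.Perm (Vtx m))) : Prop :=
  ∀ u v : Vtx m, u.length = v.length → ∃ g ∈ G, g u = v

/-- `G` is self-similar: the section of any `g ∈ G` at any vertex `v` again belongs to `G`,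
i.e. there is `h ∈ G` with `g (v ++ u) = g v ++ h u` for all words `u`. -/
def SelfSimilar (m : ℕ) (G : Subgroup (Equiv.Perm (Vtx m))) : Prop :=
  ∀ g ∈ G, ∀ v : Vtx m, ∃ h ∈ G, ∀ u : Vtx m, g (v ++ u) = g v ++ h u

/-- The rigid vertex stabilizer of `v` in `G`: elements of `G` fixing `v` and every vertex
outside the subtree rooted at `v`. -/
def rist (m : ℕ) (G : Subgroup (Equiv.Perm (Vtx m))) (v : Vtx m) :
    Subgroup (Equiv.Perm (Vtx m)) :=
  G ⊓ ⨅ u ∈ {u : Vtx m | u = v ∨ ¬ v <+: u}, MulAction.stabilizer (Equiv.Perm (Vtx m)) u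

/-- The rigid level stabilizer `Rist_G(n)`: the (internal direct) product of the rigid
vertex stabilizers of the vertices at level `n`, i.e. the subgroup they generate. -/
def RistL (m : ℕ) (G : Subgroup (Equiv.Perm (Vtx m))) (n : ℕ) :
    Subgroup (Equiv.Perm (Vtx m)) :=
  ⨆ v ∈ {v : Vtx m | v.length = n}, rist m G v

/-- `N` is a normal subgroup of `G` (both given as subgroups of an ambient group). -/
def NormalIn {X : Type*} [Group X] (N G : Subgroup X) : Prop :=
  N ≤ G ∧ ∀ g ∈ G, ∀ x ∈ N, g * x * g⁻¹ ∈ N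

/-- The rooted automorphism associated to `σ`: it permutes the first letter by `σ` and is
trivial elsewhere. -/
def rootedPerm (m : ℕ) (σ : Equiv.Perm (Fin m)) : Equiv.Perm (Vtx m) where
  toFun v := match v with
    | [] => []
    | x :: w => σ x :: w
  invFun v := match v with
    | [] => []
    | x :: w => σ⁻¹ x :: w
  left_inv v := by cases v with
    | nil => rfl
    | cons x w => simp
  right_inv v := by cases v with
    | nil => rfl
    | cons x w => simp

/-- The embedding `H → W_H` by rooted automorphisms, as a group homomorphism. -/
def rootedHom (m : ℕ) : Equiv.Perm (Fin m) →* Equiv.Perm (Vtx m) where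
  toFun := rootedPerm m
  map_one' := by
    ext v
    cases v <;> rfl
  map_mul' σ τ := by
    ext v
    cases v <;> rfl

/-- `D_m(K)`: the preimage under the first-level section map `ψ` of the diagonal copy
`{(k,…,k) : k ∈ K}`, i.e. those `f` fixing the first level whose section at every
first-level vertex is one and the same element `k ∈ K`. -/
def diagSub (m : ℕ) (K : Subgroup (Equiv.Perm (Vtx m))) : Subgroup (Equiv.Perm (Vtx m)) where
  carrier := {f | f [] = [] ∧ ∃ k ∈ K, ∀ (x : Fin m) (u : Vtx m), f (x :: u) = x :: k u}
  one_mem' := ⟨rfl, 1, K.one_mem, fun _ _ => rfl⟩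
  mul_mem' := by
    rintro f g ⟨hf0, kf, hkf, hf⟩ ⟨hg0, kg, hkg, hg⟩
    refine ⟨?_, kf * kg, K.mul_mem hkf hkg, fun x u => ?_⟩
    · show f (g []) = []
      rw [hg0, hf0]
    · show f (g (x :: u)) = x :: kf (kg u)
      rw [hg x u, hf x (kg u)]
  inv_mem' := by
    rintro f ⟨hf0, k, hk, hf⟩
    refine ⟨?_, k⁻¹, K.inv_mem hk, fun x u => ?_⟩
    · calc (f⁻¹ : Equiv.Perm (Vtx m)) [] = f⁻¹ (f []) := by rw [hf0]
        _ = [] := Equiv.symm_apply_apply f []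
    · apply Equiv.injective f
      rw [(show ∀ {α : Type} (e : Equiv.Perm α) (y : α), e (e⁻¹ y) = y from fun e y => e.apply_symm_apply y), hf x (k⁻¹ u), (show ∀ {α : Type} (e : Equiv.Perm α) (y : α), e (e⁻¹ y) = y from fun e y => e.apply_symm_apply y)]

/-- The group `G_K = ⟨H, D_m(K)⟩`, where `H` acts by rooted automorphisms. -/
def diagGroup (m : ℕ) (H : Subgroup (Equiv.Perm (Fin m))) (K : Subgroup (Equiv.Perm (Vtx m))) :
    Subgroup (Equiv.Perm (Vtx m)) :=
  H.map (rootedHom m) ⊔ diagSub m K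

/-- The center of a subgroup `G` of an ambient group, as a subgroup of the ambient group. -/
def centerOf {X : Type*} [Group X] (G : Subgroup X) : Subgroup X :=
  Subgroup.centralizer (G : Set X) ⊓ G

/-- The `G`-orbit of a vertex `v`. -/
def orbitSet (m : ℕ) (G : Subgroup (Equiv.Perm (Vtx m))) (v : Vtx m) : Set (Vtx m) :=
  {w | ∃ g ∈ G, g v = w}

/-- The number of `G`-orbits on the `n`-th level of the tree. -/
noncomputable def numOrbits (m : ℕ) (G : Subgroup (Equiv.Perm (Vtx m))) (n : ℕ) : ℕ :=
  Nat.card {s : Set (Vtx m) // ∃ v : Vtx m, v.length = n ∧ s = orbitSet m G v}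

namespace S6

variable {m : ℕ} {H : Subgroup (Equiv.Perm (Fin m))}

/-- the local permutation of `f` at `v`, as a raw function. -/
def lp (f : Equiv.Perm (Vtx m)) (v : Vtx m) (x : Fin m) : Fin m :=
  (f (v ++ [x])).getLastD x

theorem wr_nil {f : Equiv.Perm (Vtx m)} (hf : f ∈ wreath m H) : f [] = [] := hf.1

theorem lp_spec {f : Equiv.Perm (Vtx m)} (hf : f ∈ wreath m H) (v : Vtx m) :
    ∃ σ : Equiv.Perm (Fin m), lp f v = ⇑σ ∧ ∀ x, f (v ++ [x]) = f v ++ [σ x] := by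
  obtain ⟨σ, hσ, h⟩ := hf.2 v
  exact ⟨σ, funext fun x => by simp [lp, h x, List.getLastD_concat], h⟩

theorem wr_concat {f : Equiv.Perm (Vtx m)} (hf : f ∈ wreath m H) (v : Vtx m) (x : Fin m) :
    f (v ++ [x]) = f v ++ [lp f v x] := by
  obtain ⟨σ, hs, h⟩ := lp_spec hf v
  rw [h, hs]

theorem wr_length {f : Equiv.Perm (Vtx m)} (hf : f ∈ wreath m H) (v : Vtx m) :
    (f v).length = v.length := by
  induction v using List.reverseRecOn with
  | nil => rw [wr_nil hf]
  | append_singleton v x ih => rw [wr_concat hf]; simp [ih]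

theorem wr_take {f : Equiv.Perm (Vtx m)} (hf : f ∈ wreath m H) (v u : Vtx m) :
    (f (v ++ u)).take v.length = f v := by
  induction u using List.reverseRecOn with
  | nil =>
    simp only [List.append_nil]
    conv_lhs => rw [← wr_length hf v]
    exact List.take_length
  | append_singleton u x ih =>
    rw [← List.append_assoc, wr_concat hf (v ++ u) x,
      List.take_append_of_le_length (by rw [wr_length hf]; simp), ih]

theorem wr_append {f : Equiv.Perm (Vtx m)} (hf : f ∈ wreath m H) (v u : Vtx m) :
    f (v ++ u) = f v ++ (f (v ++ u)).drop v.length := by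
  conv_lhs => rw [← List.take_append_drop v.length (f (v ++ u))]
  rw [wr_take hf]

end S6

open Filter Topology Relation

namespace S6

variable {m : ℕ} {H : Subgroup (Equiv.Perm (Fin m))} {G : Subgroup (Equiv.Perm (Vtx m))}

section core

theorem semireg (hlt : LevelTransitive m G) {z₀ : Equiv.Perm (Vtx m)} (hz₀ : z₀ ∈ G)
    (hc : ∀ x ∈ G, z₀ * x = x * z₀) {w w' : Vtx m}
    (hw : z₀ w = w) (hl : w'.length = w.length) : z₀ w' = w' := by
  obtain ⟨g, hg, hgw⟩ := hlt w w' hl.symm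
  have h := congrArg (fun f : Equiv.Perm (Vtx m) => f w) (hc g hg)
  simp only [Equiv.Perm.mul_apply] at h
  rw [← hgw, h, hw]

theorem moves_longer (hGW : G ≤ wreath m H) (hlt : LevelTransitive m G) {z₀ : Equiv.Perm (Vtx m)} (hz₀ : z₀ ∈ G)
    (hc : ∀ x ∈ G, z₀ * x = x * z₀) {a w : Vtx m}
    (ha : z₀ a ≠ a) (hlen : a.length ≤ w.length) : z₀ w ≠ w := by
  intro hw
  set v := w.take a.length with hv
  have hvl : v.length = a.length := by
    rw [hv, List.length_take]; omega
  have h1 : (z₀ (v ++ w.drop a.length)).take v.length = z₀ v := wr_take (hGW hz₀) _ _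
  rw [List.take_append_drop, hw, hv, hvl] at h1
  have h2 : z₀ v = v := h1.symm
  exact ha (semireg hlt hz₀ hc h2 hvl.symm)

/-- one-step suffix rewriting by `z`. -/
def stepR (z : Equiv.Perm (Vtx m)) (w w' : Vtx m) : Prop :=
  ∃ v u, w = v ++ u ∧ w' = v ++ z u

/-- the equivalence generated by suffix rewriting. -/
abbrev ER (z : Equiv.Perm (Vtx m)) : Vtx m → Vtx m → Prop := Relation.EqvGen (stepR z)

theorem ER_length {z : Equiv.Perm (Vtx m)} (hzW : z ∈ wreath m H) {w w' : Vtx m}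
    (h : ER z w w') : w.length = w'.length := by
  induction h with
  | rel a b hab => obtain ⟨v, u, rfl, rfl⟩ := hab; simp [wr_length hzW]
  | refl => rfl
  | symm a b _ ih => omega
  | trans a b c _ _ ih1 ih2 => omega

theorem ER_append {z : Equiv.Perm (Vtx m)} {b b' : Vtx m} (a : Vtx m)
    (h : ER z b b') : ER z (a ++ b) (a ++ b') := by
  induction h with
  | rel x y hxy =>
    obtain ⟨v, u, rfl, rfl⟩ := hxy
    exact EqvGen.rel _ _ ⟨a ++ v, u, by simp, by simp⟩
  | refl x => exact EqvGen.refl _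
  | symm x y _ ih => exact EqvGen.symm _ _ ih
  | trans x y w _ _ ih1 ih2 => exact EqvGen.trans _ _ _ ih1 ih2

theorem ER_pow {z : Equiv.Perm (Vtx m)} (j : ℕ) (w : Vtx m) : ER z w ((z ^ j) w) := by
  induction j with
  | zero => simpa using EqvGen.refl w
  | succ j ih =>
    have hstep : stepR z ((z ^ j) w) (z ((z ^ j) w)) := ⟨[], (z ^ j) w, rfl, rfl⟩
    have h2 := EqvGen.trans _ _ _ ih (EqvGen.rel _ _ hstep)
    have : (z ^ (j + 1)) w = z ((z ^ j) w) := by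
      rw [pow_succ']; rfl
    rwa [this]

/-- class representative. -/
noncomputable def rep (z : Equiv.Perm (Vtx m)) (w : Vtx m) : Vtx m :=
  (Quotient.mk ⟨ER z, Relation.EqvGen.is_equivalence _⟩ w).out

theorem rep_er (z : Equiv.Perm (Vtx m)) (w : Vtx m) : ER z (rep z w) w :=
  @Quotient.mk_out _ ⟨ER z, Relation.EqvGen.is_equivalence _⟩ w

theorem rep_eq_of_er {z : Equiv.Perm (Vtx m)} {w w' : Vtx m} (h : ER z w w') :
    rep z w = rep z w' := by
  unfold rep
  congr 1
  exact Quotient.sound h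

theorem rep_idem (z : Equiv.Perm (Vtx m)) (w : Vtx m) : rep z (rep z w) = rep z w :=
  rep_eq_of_er (rep_er z w)

end core

end S6
namespace S6

variable {m : ℕ} {H : Subgroup (Equiv.Perm (Fin m))} {G : Subgroup (Equiv.Perm (Vtx m))}

section prop

variable (hGW : G ≤ wreath m H) (hss : SelfSimilar m G)
variable {z : Equiv.Perm (Vtx m)} (hzG : z ∈ G) (hzc : ∀ x ∈ G, z * x = x * z)

include hGW hss hzG hzc

theorem prop_eq {g : Equiv.Perm (Vtx m)} (hg : g ∈ G) (v u : Vtx m) (x : Fin m) :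
    lp g (v ++ z u) (lp z u x)
      = lp z ((g (v ++ u)).drop v.length) (lp g (v ++ u) x) := by
  obtain ⟨h, hh, hsec⟩ := hss g hg v
  have hgW := hGW hg
  have hzW := hGW hzG
  have hhW := hGW hh
  have hcomm : ∀ t : Vtx m, h (z t) = z (h t) := by
    intro t
    have hc := hzc h hh
    calc h (z t) = (h * z) t := rfl
    _ = (z * h) t := by rw [hc]
    _ = z (h t) := rfl
  have hu_eq : (g (v ++ u)).drop v.length = h u := by
    rw [hsec u]; exact List.drop_left' (wr_length hgW v)
  have hlp_h : lp h u = lp g (v ++ u) := by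
    funext y
    have e1 : g (v ++ (u ++ [y])) = g v ++ (h u ++ [lp h u y]) := by
      rw [hsec, wr_concat hhW]
    have e2 : g ((v ++ u) ++ [y]) = (g v ++ h u) ++ [lp g (v ++ u) y] := by
      rw [wr_concat hgW, hsec]
    have e3 : (g v ++ h u) ++ [lp h u y] = (g v ++ h u) ++ [lp g (v ++ u) y] := by
      rw [List.append_assoc]
      rw [← e1, ← List.append_assoc, ← e2]
    have := List.append_cancel_left e3
    simpa using this
  -- main computation
  have E1 : g (v ++ z (u ++ [x]))
      = g (v ++ z u) ++ [lp g (v ++ z u) (lp z u x)] := by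
    rw [wr_concat hzW u x, ← List.append_assoc, wr_concat hgW]
  have E2 : g (v ++ z (u ++ [x]))
      = (g v ++ z (h u)) ++ [lp z (h u) (lp h u x)] := by
    calc g (v ++ z (u ++ [x])) = g v ++ h (z (u ++ [x])) := hsec _
    _ = g v ++ z (h (u ++ [x])) := by rw [hcomm]
    _ = g v ++ z (h u ++ [lp h u x]) := by rw [wr_concat hhW]
    _ = g v ++ (z (h u) ++ [lp z (h u) (lp h u x)]) := by rw [wr_concat hzW]
    _ = (g v ++ z (h u)) ++ [lp z (h u) (lp h u x)] := by rw [List.append_assoc]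
  have E3 : g (v ++ z u) = g v ++ z (h u) := by
    rw [hsec, hcomm]
  rw [E3] at E1
  have e4 : (g v ++ z (h u)) ++ [lp g (v ++ z u) (lp z u x)]
      = (g v ++ z (h u)) ++ [lp z (h u) (lp h u x)] := by rw [← E1, ← E2]
  have := List.append_cancel_left e4
  simp only [List.cons.injEq, and_true] at this
  rw [this, hu_eq, hlp_h]

theorem lp_congr {g g' : Equiv.Perm (Vtx m)} (hg : g ∈ G) (hg' : g' ∈ G) {k : ℕ}
    (hagree : ∀ t : Vtx m, t.length ≤ k → g t = g' t) :
    ∀ w w' : Vtx m, ER z w w' → w.length ≤ k →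
      (lp g w = lp g' w ↔ lp g w' = lp g' w') := by
  have hzW := hGW hzG
  intro w w' h
  induction h with
  | rel a b hab =>
    intro hwk
    obtain ⟨v, u, rfl, rfl⟩ := hab
    constructor
    · intro hlp
      funext y
      obtain ⟨σ, hσf, -⟩ := lp_spec hzW u
      have hy : lp z u (σ.symm y) = y := by rw [hσf]; simp
      rw [← hy, prop_eq hGW hss hzG hzc hg, prop_eq hGW hss hzG hzc hg',
        hagree (v ++ u) hwk, hlp]
    · intro hlp
      funext x
      have E := prop_eq hGW hss hzG hzc hg v u x
      have E' := prop_eq hGW hss hzG hzc hg' v u x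
      rw [hagree (v ++ u) hwk] at E
      have hEE : lp z ((g' (v ++ u)).drop v.length) (lp g (v ++ u) x)
          = lp z ((g' (v ++ u)).drop v.length) (lp g' (v ++ u) x) := by
        rw [← E, ← E', hlp]
      obtain ⟨τ, hτf, -⟩ := lp_spec hzW ((g' (v ++ u)).drop v.length)
      rw [hτf] at hEE
      exact τ.injective hEE
  | refl => intro _; exact Iff.rfl
  | symm a b hab ih =>
    intro hbk
    have hl : a.length = b.length := ER_length hzW hab
    exact (ih (by omega)).symm
  | trans a b c hab hbc ih1 ih2 =>
    intro hak
    have hl : a.length = b.length := ER_length hzW hab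
    exact (ih1 hak).trans (ih2 (by omega))

theorem determine {g g' : Equiv.Perm (Vtx m)} (hg : g ∈ G) (hg' : g' ∈ G) {N : ℕ}
    (hrep : ∀ w : Vtx m, w.length < N → rep z w = w → lp g w = lp g' w) :
    ∀ w : Vtx m, w.length ≤ N → g w = g' w := by
  have hzW := hGW hzG
  suffices hmain : ∀ ℓ, ℓ ≤ N → ∀ w : Vtx m, w.length = ℓ → g w = g' w by
    intro w hw; exact hmain _ hw w rfl
  intro ℓ
  induction ℓ using Nat.strong_induction_on with
  | _ ℓ IH =>
    intro hℓN w hw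
    rcases List.eq_nil_or_concat w with rfl | ⟨v, x, rfl⟩
    · rw [wr_nil (hGW hg), wr_nil (hGW hg')]
    · rw [List.concat_eq_append] at hw ⊢
      have hlen : v.length + 1 = ℓ := by simpa using hw
      have hagree : ∀ t : Vtx m, t.length ≤ v.length → g t = g' t := fun t ht =>
        IH t.length (by omega) (by omega) t rfl
      have hgv : g v = g' v := hagree v le_rfl
      have hlpv : lp g v = lp g' v := by
        have h1 : ER z (rep z v) v := rep_er z v
        have hlrep : (rep z v).length = v.length := ER_length hzW h1
        have hrepv : lp g (rep z v) = lp g' (rep z v) :=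
          hrep _ (by omega) (rep_idem z v)
        exact (lp_congr hGW hss hzG hzc hg hg' hagree _ _ h1 (by omega)).mp hrepv
      rw [wr_concat (hGW hg), wr_concat (hGW hg'), hgv, hlpv]

end prop

end S6
namespace S6

variable {m : ℕ} {H : Subgroup (Equiv.Perm (Fin m))} {G : Subgroup (Equiv.Perm (Vtx m))}

noncomputable def levelFinset (m ℓ : ℕ) : Finset (Vtx m) :=
  (List.finite_length_eq (Fin m) ℓ).toFinset

theorem mem_levelFinset {ℓ : ℕ} {w : Vtx m} : w ∈ levelFinset m ℓ ↔ w.length = ℓ := by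
  simp [levelFinset]

theorem card_levelFinset (ℓ : ℕ) : (levelFinset m ℓ).card = m ^ ℓ := by
  have e1 : {w // w ∈ levelFinset m ℓ} ≃ List.Vector (Fin m) ℓ :=
    Equiv.subtypeEquivRight (fun w => by simpa using (mem_levelFinset (ℓ := ℓ) (w := w)))
  have := Nat.card_eq_finsetCard (levelFinset m ℓ)
  rw [← this, Nat.card_congr e1, Nat.card_eq_fintype_card, card_vector, Fintype.card_fin]

/-- transversal of the `z`-classes at level `ℓ`. -/
noncomputable def repFinset (z : Equiv.Perm (Vtx m)) (ℓ : ℕ) : Finset (Vtx m) :=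
  (levelFinset m ℓ).filter (fun w => rep z w = w)

theorem mem_repFinset {z : Equiv.Perm (Vtx m)} {ℓ : ℕ} {w : Vtx m} :
    w ∈ repFinset z ℓ ↔ w.length = ℓ ∧ rep z w = w := by
  rw [repFinset, Finset.mem_filter, mem_levelFinset]

theorem card_repFinset_le (z : Equiv.Perm (Vtx m)) (ℓ : ℕ) :
    (repFinset z ℓ).card ≤ m ^ ℓ := by
  rw [← card_levelFinset (m := m) ℓ]
  exact Finset.card_le_card (Finset.filter_subset _ _)

theorem card_repFinset_mul (hzW : z ∈ wreath m H) {C ℓ : ℕ}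
    (hC : ∀ w : Vtx m, w.length = ℓ →
      ∃ s : Finset (Vtx m), C ≤ s.card ∧ ∀ x ∈ s, ER z w x) :
    C * (repFinset z ℓ).card ≤ m ^ ℓ := by
  classical
  choose s hs1 hs2 using hC
  set t : Vtx m → Finset (Vtx m) := fun w =>
    if h : w.length = ℓ then s w h else ∅ with ht
  have hmem_len : ∀ w (hw : w ∈ repFinset z ℓ), ∀ x ∈ t w, x.length = ℓ ∧ rep z x = w := by
    intro w hw x hx
    obtain ⟨hwl, hwr⟩ := mem_repFinset.mp hw
    rw [ht] at hx
    simp only [dif_pos hwl] at hx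
    have her := hs2 w hwl x hx
    constructor
    · rw [← ER_length hzW her, hwl]
    · rw [← rep_eq_of_er her, hwr]
  have hdisj : ∀ w ∈ repFinset z ℓ, ∀ w' ∈ repFinset z ℓ, w ≠ w' → Disjoint (t w) (t w') := by
    intro w hw w' hw' hne
    rw [Finset.disjoint_left]
    intro x hx hx'
    exact hne (((hmem_len w hw x hx).2).symm.trans ((hmem_len w' hw' x hx').2))
  have hsub : (repFinset z ℓ).biUnion t ⊆ levelFinset m ℓ := by
    intro x hx
    obtain ⟨w, hw, hxw⟩ := Finset.mem_biUnion.mp hx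
    exact mem_levelFinset.mpr (hmem_len w hw x hxw).1
  calc C * (repFinset z ℓ).card = ∑ _w ∈ repFinset z ℓ, C := by
        rw [Finset.sum_const, smul_eq_mul, mul_comm]
  _ ≤ ∑ w ∈ repFinset z ℓ, (t w).card := by
        refine Finset.sum_le_sum (fun w hw => ?_)
        have hwl := (mem_repFinset.mp hw).1
        rw [ht]; simp only [dif_pos hwl]; exact hs1 w hwl
  _ = ((repFinset z ℓ).biUnion t).card := (Finset.card_biUnion hdisj).symm
  _ ≤ (levelFinset m ℓ).card := Finset.card_le_card hsub
  _ = m ^ ℓ := card_levelFinset ℓ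

/-- the transversal up to (but excluding) level `N`. -/
noncomputable def TN (z : Equiv.Perm (Vtx m)) (N : ℕ) : Finset (Vtx m) :=
  (Finset.range N).biUnion (fun ℓ => repFinset z ℓ)

theorem card_TN_le (z : Equiv.Perm (Vtx m)) (N : ℕ) :
    (TN z N).card ≤ ∑ ℓ ∈ Finset.range N, (repFinset z ℓ).card :=
  Finset.card_biUnion_le

theorem mem_TN {z : Equiv.Perm (Vtx m)} {N : ℕ} {w : Vtx m} :
    w ∈ TN z N ↔ w.length < N ∧ rep z w = w := by
  simp only [TN, Finset.mem_biUnion, Finset.mem_range]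
  constructor
  · rintro ⟨ℓ, hℓ, hw⟩
    obtain ⟨h1, h2⟩ := mem_repFinset.mp hw
    exact ⟨by omega, h2⟩
  · rintro ⟨h1, h2⟩
    exact ⟨w.length, h1, mem_repFinset.mpr ⟨rfl, h2⟩⟩

end S6
namespace S6

variable {m : ℕ} {H : Subgroup (Equiv.Perm (Fin m))} {G : Subgroup (Equiv.Perm (Vtx m))}

/-- classes grow uniformly. -/
def KLP (z : Equiv.Perm (Vtx m)) : Prop :=
  ∀ C : ℕ, ∃ L, 1 ≤ L ∧ ∀ w : Vtx m, L ≤ w.length →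
    ∃ s : Finset (Vtx m), C ≤ s.card ∧ ∀ x ∈ s, ER z w x

section kl

variable (hGW : G ≤ wreath m H) (hlt : LevelTransitive m G)
variable {z : Equiv.Perm (Vtx m)} (hzG : z ∈ G) (hzc : ∀ x ∈ G, z * x = x * z)

include hGW hlt hzG hzc

theorem thresholds (C : ℕ) :
    ∃ L, 1 ≤ L ∧ ∀ i, 0 < i → i < C → z ^ i ≠ 1 →
      ∀ w : Vtx m, L ≤ w.length → (z ^ i) w ≠ w := by
  induction C with
  | zero => exact ⟨1, le_rfl, by omega⟩
  | succ C ih =>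
    obtain ⟨L, hL1, hL⟩ := ih
    rcases eq_or_ne (z ^ C) 1 with h1 | h1
    · refine ⟨L, hL1, fun i hi0 hiC hne w hw => ?_⟩
      rcases lt_or_eq_of_le (Nat.lt_succ_iff.mp hiC) with hlt' | rfl
      · exact hL i hi0 hlt' hne w hw
      · exact absurd h1 hne
    · have : ∃ a : Vtx m, (z ^ C) a ≠ a := by
        by_contra hcon
        push_neg at hcon
        exact h1 (Equiv.ext hcon)
      obtain ⟨a, ha⟩ := this
      refine ⟨max L a.length, le_trans hL1 (le_max_left _ _), fun i hi0 hiC hne w hw => ?_⟩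
      rcases lt_or_eq_of_le (Nat.lt_succ_iff.mp hiC) with hlt' | rfl
      · exact hL i hi0 hlt' hne w (le_trans (le_max_left _ _) hw)
      · have hcen : ∀ x ∈ G, z ^ i * x = x * z ^ i := fun x hx =>
          (Commute.pow_left (hzc x hx) i : _)
        exact moves_longer hGW hlt (pow_mem hzG i) hcen ha
          (le_trans (le_max_right _ _) hw)

theorem KL_of_infinite (hord : ∀ i, 0 < i → z ^ i ≠ 1) : KLP z := by
  intro C
  obtain ⟨L, hL1, hL⟩ := thresholds hGW hlt hzG hzc C
  refine ⟨L, hL1, fun w hw => ?_⟩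
  classical
  refine ⟨Finset.image (fun k : Fin C => (z ^ (k : ℕ)) w) Finset.univ, ?_, ?_⟩
  · have hinj : ∀ k k' : Fin C, k < k' → (z ^ (k : ℕ)) w ≠ (z ^ (k' : ℕ)) w := by
      intro k k' hkk heq
      have h1 : (z ^ ((k' : ℕ) - k)) ((z ^ (k : ℕ)) w) = (z ^ (k : ℕ)) w := by
        rw [← Equiv.Perm.mul_apply, ← pow_add]
        rw [Nat.sub_add_cancel (le_of_lt hkk)]
        exact heq.symm
      have hlw : ((z ^ (k : ℕ)) w).length = w.length := wr_length (pow_mem (hGW hzG) _) w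
      exact hL ((k' : ℕ) - k) (by omega) (by omega) (hord _ (by omega)) _
        (by omega) h1
    have hinj2 : Set.InjOn (fun k : Fin C => (z ^ (k : ℕ)) w)
        ↑(Finset.univ : Finset (Fin C)) := by
      intro k _ k' _ heq
      by_contra hne
      rcases lt_or_gt_of_ne hne with h | h
      · exact hinj k k' h heq
      · exact hinj k' k h heq.symm
    rw [Finset.card_image_of_injOn hinj2, Finset.card_univ, Fintype.card_fin]
  · intro x hx
    obtain ⟨k, _, rfl⟩ := Finset.mem_image.mp hx
    exact ER_pow _ w

theorem KL_of_prime {p n₀ : ℕ} (hp : 2 ≤ p) (hzp : z ^ p = 1) (hn₀ : 1 ≤ n₀)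
    (hfree : ∀ i, 0 < i → i < p → ∀ w : Vtx m, n₀ ≤ w.length → (z ^ i) w ≠ w) :
    KLP z := by
  have hzW := hGW hzG
  have main : ∀ n, ∀ w : Vtx m, w.length = n →
      ∃ s : Finset (Vtx m), p ^ (n / n₀) ≤ s.card ∧ ∀ x ∈ s, ER z w x := by
    intro n
    induction n using Nat.strong_induction_on with
    | _ n IH =>
      intro w hw
      by_cases hsh : n < n₀
      · refine ⟨{w}, ?_, ?_⟩
        · rw [Nat.div_eq_of_lt hsh, pow_zero, Finset.card_singleton]
        · intro x hx
          rw [Finset.mem_singleton.mp hx]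
          exact Relation.EqvGen.refl w
      · push_neg at hsh
        set a := w.take n₀ with hadef
        set b := w.drop n₀ with hbdef
        have hab : w = a ++ b := (List.take_append_drop _ _).symm
        have hal : a.length = n₀ := by rw [hadef, List.length_take]; omega
        have hbl : b.length = n - n₀ := by rw [hbdef, List.length_drop, hw]
        obtain ⟨s', hs'c, hs'er⟩ := IH (n - n₀) (by omega) b hbl
        classical
        refine ⟨(Finset.univ (α := Fin p) ×ˢ s').image
          (fun q => (z ^ (q.1 : ℕ)) (a ++ q.2)), ?_, ?_⟩
        · have hinj : Set.InjOn (fun q : Fin p × Vtx m => (z ^ (q.1 : ℕ)) (a ++ q.2))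
              ↑(Finset.univ (α := Fin p) ×ˢ s') := by
            rintro ⟨k, b'⟩ hk ⟨k', b''⟩ hk' heq
            simp only [Finset.coe_product, Set.mem_prod, Finset.mem_coe] at hk hk'
            simp only at heq
            have hkk' : k = k' := by
              by_contra hne
              have hTake : ∀ j : Fin p, ∀ c : Vtx m, c ∈ s' →
                  ((z ^ (j : ℕ)) (a ++ c)).take n₀ = (z ^ (j : ℕ)) a := by
                intro j c _
                have := wr_take (pow_mem hzW (j : ℕ)) a c
                rwa [hal] at this
              have heqa : (z ^ (k : ℕ)) a = (z ^ (k' : ℕ)) a := by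
                rw [← hTake k b' hk.2, ← hTake k' b'' hk'.2, heq]
              have key : ∀ i j : Fin p, (i : ℕ) < (j : ℕ) →
                  (z ^ (i : ℕ)) a = (z ^ (j : ℕ)) a → False := by
                intro i j hij he
                have h1 : (z ^ ((j : ℕ) - i)) ((z ^ (i : ℕ)) a) = (z ^ (i : ℕ)) a := by
                  rw [← Equiv.Perm.mul_apply, ← pow_add, Nat.sub_add_cancel (le_of_lt hij)]
                  exact he.symm
                have hla : ((z ^ (i : ℕ)) a).length = n₀ := by
                  rw [wr_length (pow_mem hzW _), hal]
                exact hfree ((j : ℕ) - i) (by omega) (by omega) _ (by omega) h1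
              rcases lt_or_gt_of_ne (fun h : (k : ℕ) = (k' : ℕ) => hne (Fin.ext h)) with h | h
              · exact key k k' h heqa
              · exact key k' k h heqa.symm
            subst hkk'
            have := (z ^ (k : ℕ)).injective heq
            have hb : b' = b'' := List.append_cancel_left this
            rw [hb]
          rw [Finset.card_image_of_injOn hinj, Finset.card_product, Finset.card_univ,
            Fintype.card_fin]
          have hdiv : n / n₀ = (n - n₀) / n₀ + 1 := Nat.div_eq_sub_div (by omega) hsh
          rw [hdiv, pow_succ, mul_comm]
          exact Nat.mul_le_mul_left p hs'c
        · intro x hx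
          obtain ⟨⟨k, b'⟩, hmem, rfl⟩ := Finset.mem_image.mp hx
          simp only [Finset.mem_product] at hmem
          have h1 : ER z w (a ++ b') := by
            rw [hab]; exact ER_append a (hs'er b' hmem.2)
          exact Relation.EqvGen.trans _ _ _ h1 (ER_pow _ _)
  intro C
  refine ⟨max 1 (n₀ * C), le_max_left _ _, fun w hw => ?_⟩
  obtain ⟨s, hsc, hser⟩ := main w.length w rfl
  refine ⟨s, le_trans ?_ hsc, hser⟩
  have h1 : C ≤ w.length / n₀ := by
    rw [Nat.le_div_iff_mul_le (by omega : 0 < n₀), mul_comm]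
    have := le_trans (le_max_right 1 (n₀ * C)) hw
    omega
  calc C ≤ 2 ^ C := le_of_lt Nat.lt_two_pow_self
  _ ≤ p ^ C := Nat.pow_le_pow_left hp C
  _ ≤ p ^ (w.length / n₀) := Nat.pow_le_pow_right (by omega) h1

theorem exists_good (hz1 : z ≠ 1) :
    ∃ z' : Equiv.Perm (Vtx m), z' ∈ G ∧ (∀ x ∈ G, z' * x = x * z') ∧ z' ≠ 1 ∧ KLP z' := by
  by_cases hord : ∀ i, 0 < i → z ^ i ≠ 1
  · exact ⟨z, hzG, hzc, hz1, KL_of_infinite hGW hlt hzG hzc hord⟩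
  · push_neg at hord
    obtain ⟨i, hi0, hi1⟩ := hord
    have hfin : IsOfFinOrder z := isOfFinOrder_iff_pow_eq_one.mpr ⟨i, hi0, hi1⟩
    set q := orderOf z with hq
    have hq0 : 0 < q := hfin.orderOf_pos
    have hq1 : q ≠ 1 := fun h => hz1 (orderOf_eq_one_iff.mp (hq ▸ h))
    set p := q.minFac with hpdef
    have hp : p.Prime := Nat.minFac_prime hq1
    set z' := z ^ (q / p) with hz'
    have hqp : q / p * p = q := Nat.div_mul_cancel (Nat.minFac_dvd q)
    have hz'p : z' ^ p = 1 := by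
      rw [hz', ← pow_mul, hqp]
      exact pow_orderOf_eq_one z
    have hdivpos : 0 < q / p := Nat.div_pos (Nat.minFac_le hq0) hp.pos
    have hz'pow : ∀ i, 0 < i → i < p → z' ^ i ≠ 1 := by
      intro i hi0' hip heq
      rw [hz', ← pow_mul] at heq
      have hdvd : q ∣ q / p * i := orderOf_dvd_of_pow_eq_one heq
      have hlt' : q / p * i < q := by
        calc q / p * i < q / p * p := mul_lt_mul_of_pos_left hip hdivpos
        _ = q := hqp
      have hpos : 0 < q / p * i := Nat.mul_pos hdivpos hi0'
      exact absurd (Nat.le_of_dvd hpos hdvd) (by omega)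
    have hz'G : z' ∈ G := pow_mem hzG _
    have hz'c : ∀ x ∈ G, z' * x = x * z' := fun x hx =>
      (Commute.pow_left (hzc x hx) (q / p) : _)
    have hz'1 : z' ≠ 1 := by
      have := hz'pow 1 one_pos hp.one_lt
      simpa using this
    obtain ⟨L, hL1, hL⟩ := thresholds hGW hlt hz'G hz'c p
    refine ⟨z', hz'G, hz'c, hz'1, ?_⟩
    exact KL_of_prime hGW hlt hz'G hz'c hp.two_le hz'p hL1
      (fun i hi0' hip w hw => hL i hi0' hip (hz'pow i hi0' hip) w hw)

end kl

end S6
namespace S6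

variable {m : ℕ} {H : Subgroup (Equiv.Perm (Fin m))} {G : Subgroup (Equiv.Perm (Vtx m))}

theorem levelStab_mem_iff {f : Equiv.Perm (Vtx m)} {n : ℕ} :
    f ∈ levelStab m n ↔ ∀ w : Vtx m, w.length ≤ n → f w = w := by
  simp only [levelStab, Subgroup.mem_iInf, MulAction.mem_stabilizer_iff,
    Equiv.Perm.smul_def, Set.mem_setOf_eq]

/-- quotient of `X` by the `N`-th level stabilizer. -/
abbrev Qn (X : Subgroup (Equiv.Perm (Vtx m))) (N : ℕ) : Type _ :=
  X ⧸ ((levelStab m N).subgroupOf X)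

theorem relindex_eq_card (X : Subgroup (Equiv.Perm (Vtx m))) (N : ℕ) :
    (levelStab m N).relIndex X = Nat.card (Qn X N) := rfl

theorem coset_eq_iff {X : Subgroup (Equiv.Perm (Vtx m))} {N : ℕ} (g g' : X) :
    (QuotientGroup.mk g : Qn X N) = QuotientGroup.mk g' ↔
      ∀ w : Vtx m, w.length ≤ N → (g : Equiv.Perm (Vtx m)) w = (g' : Equiv.Perm (Vtx m)) w := by
  rw [QuotientGroup.eq, Subgroup.mem_subgroupOf]
  push_cast
  rw [levelStab_mem_iff]
  constructor
  · intro h w hw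
    have := h w hw
    rw [Equiv.Perm.mul_apply] at this
    calc (g : Equiv.Perm (Vtx m)) w
        = (g : Equiv.Perm (Vtx m)) (((g : Equiv.Perm (Vtx m))⁻¹) ((g' : Equiv.Perm (Vtx m)) w)) := by
          rw [this]
    _ = (g' : Equiv.Perm (Vtx m)) w := Equiv.apply_symm_apply _ _
  · intro h w hw
    rw [Equiv.Perm.mul_apply, ← h w hw]
    exact Equiv.symm_apply_apply _ _

theorem Qn_finite {X : Subgroup (Equiv.Perm (Vtx m))} (hXW : X ≤ wreath m H) (N : ℕ) :
    Finite (Qn X N) := by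
  classical
  have hfin : Finite {w : Vtx m // w.length ≤ N} :=
    (List.finite_length_le (Fin m) N).to_subtype
  set R : Qn X N → ({w : Vtx m // w.length ≤ N} → {w : Vtx m // w.length ≤ N}) :=
    fun q => Quotient.liftOn' q
      (fun g : X => fun t : {w : Vtx m // w.length ≤ N} =>
        (⟨(g : Equiv.Perm (Vtx m)) t.1, by rw [wr_length (hXW g.2)]; exact t.2⟩ :
          {w : Vtx m // w.length ≤ N}))
      (by
        intro a b hab
        rw [QuotientGroup.leftRel_apply, Subgroup.mem_subgroupOf] at hab
        push_cast at hab
        rw [levelStab_mem_iff] at hab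
        funext t
        have := hab t.1 t.2
        rw [Equiv.Perm.mul_apply] at this
        have h2 : (b : Equiv.Perm (Vtx m)) t.1 = (a : Equiv.Perm (Vtx m)) t.1 := by
          calc (b : Equiv.Perm (Vtx m)) t.1
              = (a : Equiv.Perm (Vtx m)) (((a : Equiv.Perm (Vtx m))⁻¹) ((b : Equiv.Perm (Vtx m)) t.1)) :=
                (Equiv.apply_symm_apply _ _).symm
          _ = (a : Equiv.Perm (Vtx m)) t.1 := by rw [this]
        simp [h2]) with hR
  have hRinj : Function.Injective R := by
    intro q q'
    induction q using Quotient.inductionOn'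
    induction q' using Quotient.inductionOn'
    rename_i a b
    intro hab
    have hab' : ∀ w : Vtx m, w.length ≤ N →
        (a : Equiv.Perm (Vtx m)) w = (b : Equiv.Perm (Vtx m)) w := by
      intro w hw
      have := congrFun hab ⟨w, hw⟩
      rw [hR] at this
      exact congrArg Subtype.val this
    exact (coset_eq_iff a b).mpr hab'
  exact Finite.of_injective R hRinj

section numer

variable (hGW : G ≤ wreath m H) (hss : SelfSimilar m G)
variable {z : Equiv.Perm (Vtx m)} (hzG : z ∈ G) (hzc : ∀ x ∈ G, z * x = x * z)

include hGW hss hzG hzc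

theorem numer_bound (N : ℕ) :
    Nat.card (Qn G N) ≤ (m ^ m) ^ (TN z N).card := by
  classical
  set F : G → ({w // w ∈ TN z N} → (Fin m → Fin m)) :=
    fun g => fun t => lp (g : Equiv.Perm (Vtx m)) t.1 with hF
  have hFc : ∀ a b : G, (QuotientGroup.leftRel ((levelStab m N).subgroupOf G)) a b →
      F a = F b := by
    intro a b hab
    rw [QuotientGroup.leftRel_apply, Subgroup.mem_subgroupOf] at hab
    push_cast at hab
    rw [levelStab_mem_iff] at hab
    have hagree : ∀ w : Vtx m, w.length ≤ N →
        (a : Equiv.Perm (Vtx m)) w = (b : Equiv.Perm (Vtx m)) w := by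
      intro w hw
      have := hab w hw
      rw [Equiv.Perm.mul_apply] at this
      calc (a : Equiv.Perm (Vtx m)) w
          = (a : Equiv.Perm (Vtx m)) (((a : Equiv.Perm (Vtx m))⁻¹) ((b : Equiv.Perm (Vtx m)) w)) := by
            rw [this]
      _ = (b : Equiv.Perm (Vtx m)) w := Equiv.apply_symm_apply _ _
    funext t x
    obtain ⟨hlt', _⟩ := mem_TN.mp t.2
    rw [hF]
    simp only [lp]
    rw [hagree (t.1 ++ [x]) (by simp; omega)]
  set Fbar : Qn G N → ({w // w ∈ TN z N} → (Fin m → Fin m)) :=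
    fun q => Quotient.liftOn' q F hFc with hFbar
  have hinj : Function.Injective Fbar := by
    intro q q'
    induction q using Quotient.inductionOn'
    induction q' using Quotient.inductionOn'
    rename_i a b
    intro hab
    have hlprep : ∀ w : Vtx m, w.length < N → rep z w = w →
        lp (a : Equiv.Perm (Vtx m)) w = lp (b : Equiv.Perm (Vtx m)) w := by
      intro w hw hr
      have := congrFun hab ⟨w, mem_TN.mpr ⟨hw, hr⟩⟩
      rw [hFbar] at this
      exact this
    have := determine hGW hss hzG hzc a.2 b.2 hlprep
    exact (coset_eq_iff a b).mpr (fun w hw => this w hw)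
  have hfin : Finite ({w // w ∈ TN z N} → (Fin m → Fin m)) := by
    infer_instance
  calc Nat.card (Qn G N) ≤ Nat.card ({w // w ∈ TN z N} → (Fin m → Fin m)) :=
        Nat.card_le_card_of_injective Fbar hinj
  _ = (m ^ m) ^ (TN z N).card := by
        rw [Nat.card_fun, Nat.card_eq_finsetCard]
        congr 1
        rw [Nat.card_eq_fintype_card]
        simp

end numer

end S6
namespace S6

variable {m : ℕ} {H : Subgroup (Equiv.Perm (Fin m))}

/-- modify the letter in position `r` (if any) via `F` applied to the first `r` letters. -/
def twFun (r : ℕ) (F : Vtx m → Equiv.Perm (Fin m)) (w : Vtx m) : Vtx m :=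
  if h : r < w.length then w.take r ++ F (w.take r) (w.get ⟨r, h⟩) :: w.drop (r + 1) else w

theorem twFun_twFun (r : ℕ) (F F' : Vtx m → Equiv.Perm (Fin m))
    (hFF' : ∀ v x, F' v (F v x) = x) (w : Vtx m) : twFun r F' (twFun r F w) = w := by
  by_cases h : r < w.length
  · have hw' : twFun r F w = w.take r ++ F (w.take r) (w.get ⟨r, h⟩) :: w.drop (r + 1) := by
      rw [twFun, dif_pos h]
    have htl : (w.take r).length = r := by rw [List.length_take]; omega
    have hlen : (twFun r F w).length = w.length := by
      rw [hw']; simp only [List.length_append, List.length_cons, List.length_drop, htl]; omega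
    have h2 : r < (twFun r F w).length := by omega
    rw [twFun, dif_pos h2]
    have htake : (twFun r F w).take r = w.take r := by
      rw [hw']; exact List.take_left' htl
    have hget : (twFun r F w).get ⟨r, h2⟩ = F (w.take r) (w.get ⟨r, h⟩) := by
      rw [List.get_eq_getElem]
      rw [List.getElem_of_eq hw' _]
      rw [List.getElem_append_right (by rw [htl])]
      simp [htl]
    have hdrop : (twFun r F w).drop (r + 1) = w.drop (r + 1) := by
      rw [hw', List.append_cons, List.drop_left']
      rw [List.length_append, htl, List.length_singleton]
    rw [htake, hget, hdrop, hFF']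
    simp only [List.get_eq_getElem]
    rw [← List.drop_eq_getElem_cons h]
    exact List.take_append_drop r w
  · have hw' : twFun r F w = w := by rw [twFun, dif_neg h]
    rw [hw', twFun, dif_neg h]

/-- the permutation associated with `twFun`. -/
def tw (r : ℕ) (F : Vtx m → Equiv.Perm (Fin m)) : Equiv.Perm (Vtx m) where
  toFun := twFun r F
  invFun := twFun r (fun v => (F v)⁻¹)
  left_inv w := twFun_twFun r F _ (fun v x => Equiv.symm_apply_apply _ _) w
  right_inv w := twFun_twFun r _ F (fun v x => Equiv.apply_symm_apply _ _) w

theorem tw_short (r : ℕ) (F : Vtx m → Equiv.Perm (Fin m)) {w : Vtx m} (h : w.length ≤ r) :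
    tw r F w = w := by
  show twFun r F w = w
  rw [twFun, dif_neg (by omega)]

theorem tw_level (r : ℕ) (F : Vtx m → Equiv.Perm (Fin m)) {v : Vtx m} (hv : v.length = r)
    (x : Fin m) : tw r F (v ++ [x]) = v ++ [F v x] := by
  show twFun r F (v ++ [x]) = v ++ [F v x]
  have h : r < (v ++ [x]).length := by simp; omega
  rw [twFun, dif_pos h]
  have htake : (v ++ [x]).take r = v := List.take_left' hv
  have hget : (v ++ [x]).get ⟨r, h⟩ = x := by
    rw [List.get_eq_getElem]
    exact List.getElem_concat_length hv.symm _
  have hdrop : (v ++ [x]).drop (r + 1) = [] := by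
    apply List.drop_eq_nil_of_le
    simp; omega
  rw [htake, hget, hdrop]

theorem tw_mem (r : ℕ) (F : Vtx m → Equiv.Perm (Fin m)) (hF : ∀ v, F v ∈ H) :
    tw r F ∈ wreath m H := by
  constructor
  · exact tw_short r F (by simp)
  · intro v
    rcases lt_trichotomy v.length r with hc | hc | hc
    · refine ⟨1, H.one_mem, fun x => ?_⟩
      rw [tw_short r F (le_of_lt hc), tw_short r F (by simp; omega)]
      simp
    · refine ⟨F v, hF v, fun x => ?_⟩
      rw [tw_short r F (le_of_eq hc), tw_level r F hc x]
    · refine ⟨1, H.one_mem, fun x => ?_⟩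
      have h1 : r < (v ++ [x]).length := by simp; omega
      have h2 : r < v.length := hc
      show twFun r F (v ++ [x]) = twFun r F v ++ [(1 : Equiv.Perm (Fin m)) x]
      rw [twFun, twFun, dif_pos h1, dif_pos h2]
      have htake : (v ++ [x]).take r = v.take r := List.take_append_of_le_length (by omega)
      have hget : (v ++ [x]).get ⟨r, h1⟩ = v.get ⟨r, h2⟩ := by
        rw [List.get_eq_getElem, List.get_eq_getElem]
        exact List.getElem_append_left h2
      have hdrop : (v ++ [x]).drop (r + 1) = v.drop (r + 1) ++ [x] :=
        List.drop_append_of_le_length (by omega)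
      rw [htake, hget, hdrop]
      simp

theorem denom_bound {N : ℕ} (hN : 1 ≤ N) {σ₀ : Equiv.Perm (Fin m)}
    (hσ₀H : σ₀ ∈ H) (hσ₀ : σ₀ ≠ 1) :
    2 ^ m ^ (N - 1) ≤ Nat.card (Qn (wreath m H) N) := by
  classical
  obtain ⟨x₀, hx₀⟩ : ∃ x₀, σ₀ x₀ ≠ x₀ := by
    by_contra hcon
    push_neg at hcon
    exact hσ₀ (Equiv.ext hcon)
  set D := ({w // w ∈ levelFinset m (N - 1)} → Bool) with hD
  have hFbex : ∀ b : D, ∃ Fb : Vtx m → Equiv.Perm (Fin m),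
      (∀ v, Fb v ∈ H) ∧ ∀ v : {w // w ∈ levelFinset m (N - 1)},
        Fb v.1 = if b v = true then σ₀ else 1 := by
    intro b
    refine ⟨fun v => if h : ∃ hv : v ∈ levelFinset m (N - 1), b ⟨v, hv⟩ = true
      then σ₀ else 1, fun v => ?_, fun v => ?_⟩ <;> dsimp only
    · by_cases h : ∃ hv : v ∈ levelFinset m (N - 1), b ⟨v, hv⟩ = true
      · rw [dif_pos h]; exact hσ₀H
      · rw [dif_neg h]; exact H.one_mem
    · by_cases hb : b v = true
      · rw [if_pos hb, dif_pos ⟨v.2, by rwa [Subtype.coe_eta]⟩]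
      · rw [if_neg hb, dif_neg]
        rintro ⟨hv, hbv⟩
        rw [Subtype.coe_eta] at hbv
        exact hb hbv
  choose Fb hFbH hFbeq using hFbex
  set e : D → Qn (wreath m H) N := fun b =>
    QuotientGroup.mk ⟨tw (N - 1) (Fb b), tw_mem _ _ (hFbH b)⟩ with he
  have heinj : Function.Injective e := by
    intro b b' hbb
    rw [he] at hbb
    have hvals := (coset_eq_iff _ _).mp hbb
    funext v
    have hvmem := v.2
    have hvlen : v.1.length = N - 1 := mem_levelFinset.mp v.2
    have := hvals (v.1 ++ [x₀]) (by simp; omega)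
    simp only at this
    rw [tw_level _ _ hvlen, tw_level _ _ hvlen] at this
    have hx : Fb b v.1 x₀ = Fb b' v.1 x₀ := by
      have := List.append_cancel_left this
      simpa using this
    rw [hFbeq b v, hFbeq b' v] at hx
    by_cases h1 : b v = true <;> by_cases h2 : b' v = true
    · rw [h1, h2]
    · rw [if_pos h1, if_neg h2] at hx
      simp only [Equiv.Perm.one_apply] at hx
      exact absurd hx hx₀
    · rw [if_neg h1, if_pos h2] at hx
      simp only [Equiv.Perm.one_apply] at hx
      exact absurd hx.symm hx₀
    · rw [Bool.not_eq_true] at h1 h2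
      rw [h1, h2]
  have hfin : Finite (Qn (wreath m H) N) := Qn_finite le_rfl N
  have hcard := Nat.card_le_card_of_injective e heinj
  have hDcard : Nat.card D = 2 ^ m ^ (N - 1) := by
    rw [hD, Nat.card_fun, Nat.card_eq_fintype_card (α := Bool)]
    congr 1
    rw [Nat.card_eq_finsetCard, card_levelFinset]
  omega

end S6
namespace S6

theorem lognat_nonneg (n : ℕ) : 0 ≤ Real.log n := by
  rcases Nat.eq_zero_or_pos n with rfl | h
  · simp
  · exact Real.log_nonneg (by exact_mod_cast h)

theorem sum_pow_le {m : ℕ} (hm : 2 ≤ m) (L : ℕ) :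
    ∑ ℓ ∈ Finset.range L, m ^ ℓ ≤ m ^ L := by
  induction L with
  | zero => simp
  | succ L ih =>
    calc ∑ ℓ ∈ Finset.range (L + 1), m ^ ℓ = (∑ ℓ ∈ Finset.range L, m ^ ℓ) + m ^ L :=
          Finset.sum_range_succ _ _
    _ ≤ m ^ L + m ^ L := Nat.add_le_add_right ih _
    _ = 2 * m ^ L := (two_mul _).symm
    _ ≤ m * m ^ L := Nat.mul_le_mul_right _ hm
    _ = m ^ (L + 1) := (pow_succ' m L).symm

section final

variable {m : ℕ} {H : Subgroup (Equiv.Perm (Fin m))} {G : Subgroup (Equiv.Perm (Vtx m))}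

theorem SN_bound (hm : 2 ≤ m) (hGW : G ≤ wreath m H) {z : Equiv.Perm (Vtx m)}
    (hzW : z ∈ wreath m H) {C L N : ℕ}
    (hKLC : ∀ w : Vtx m, L ≤ w.length → ∃ s : Finset (Vtx m), C ≤ s.card ∧ ∀ x ∈ s, ER z w x) :
    C * (TN z N).card ≤ C * m ^ L + m ^ N := by
  classical
  calc C * (TN z N).card ≤ C * ∑ ℓ ∈ Finset.range N, (repFinset z ℓ).card :=
        Nat.mul_le_mul_left C (card_TN_le z N)
  _ = ∑ ℓ ∈ Finset.range N, C * (repFinset z ℓ).card := Finset.mul_sum _ _ _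
  _ ≤ ∑ ℓ ∈ Finset.range N, ((if ℓ < L then C * m ^ ℓ else 0) + m ^ ℓ) := by
      refine Finset.sum_le_sum (fun ℓ _ => ?_)
      by_cases hl : ℓ < L
      · rw [if_pos hl]
        have := card_repFinset_le (m := m) z ℓ
        have h2 : C * (repFinset z ℓ).card ≤ C * m ^ ℓ := Nat.mul_le_mul_left C this
        omega
      · rw [if_neg hl]
        have h2 : C * (repFinset z ℓ).card ≤ m ^ ℓ := by
          refine card_repFinset_mul hzW (fun w hw => hKLC w ?_)
          omega
        omega
  _ = (∑ ℓ ∈ Finset.range N, if ℓ < L then C * m ^ ℓ else 0)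
        + ∑ ℓ ∈ Finset.range N, m ^ ℓ := Finset.sum_add_distrib
  _ ≤ C * m ^ L + m ^ N := by
      refine Nat.add_le_add ?_ (sum_pow_le hm N)
      calc (∑ ℓ ∈ Finset.range N, if ℓ < L then C * m ^ ℓ else 0)
          = ∑ ℓ ∈ (Finset.range N).filter (· < L), C * m ^ ℓ :=
            (Finset.sum_filter _ _).symm
      _ ≤ ∑ ℓ ∈ Finset.range L, C * m ^ ℓ := by
            refine Finset.sum_le_sum_of_subset (fun x hx => ?_)
            simp only [Finset.mem_filter, Finset.mem_range] at hx
            exact Finset.mem_range.mpr hx.2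
      _ = C * ∑ ℓ ∈ Finset.range L, m ^ ℓ := (Finset.mul_sum _ _ _).symm
      _ ≤ C * m ^ L := Nat.mul_le_mul_left C (sum_pow_le hm L)

end final

end S6
namespace S6

variable {m : ℕ} {H : Subgroup (Equiv.Perm (Fin m))} {G : Subgroup (Equiv.Perm (Vtx m))}

theorem eps_bound (hm : 2 ≤ m) (hGW : G ≤ wreath m H) (hss : SelfSimilar m G)
    {z' : Equiv.Perm (Vtx m)} (hz'G : z' ∈ G) (hz'c : ∀ x ∈ G, z' * x = x * z')
    (hKL : KLP z') {σ₀ : Equiv.Perm (Fin m)} (hσ₀H : σ₀ ∈ H) (hσ₀1 : σ₀ ≠ 1)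
    {ε : ℝ} (hε : 0 < ε) :
    ∀ᶠ N in Filter.atTop, Real.log ((levelStab m N).relIndex G) /
      Real.log ((levelStab m N).relIndex (wreath m H)) ≤ ε := by
  have hz'W : z' ∈ wreath m H := hGW hz'G
  set Mlm : ℝ := (m : ℝ) * Real.log m with hMlmdef
  have hMlm : 0 ≤ Mlm := mul_nonneg (by positivity) (lognat_nonneg m)
  have hlog2 : 0 < Real.log 2 := Real.log_pos one_lt_two
  have hεl : 0 < ε * Real.log 2 := mul_pos hε hlog2
  have hm1R : (1 : ℝ) < (m : ℝ) := by exact_mod_cast (by omega : 1 < m)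
  set C : ℕ := ⌈2 * (m : ℝ) * Mlm / (ε * Real.log 2)⌉₊ + 1 with hCdef
  have hC0 : 0 < C := Nat.succ_pos _
  have hC0R : (0 : ℝ) < (C : ℝ) := by positivity
  have hCge : 2 * (m : ℝ) * Mlm / (ε * Real.log 2) ≤ (C : ℝ) := by
    refine le_trans (Nat.le_ceil _) ?_
    rw [hCdef]
    push_cast
    linarith
  have F2 : 2 * (m : ℝ) * Mlm ≤ ε * Real.log 2 * (C : ℝ) := by
    rw [div_le_iff₀ hεl] at hCge
    linarith
  obtain ⟨L, hL1, hKLC⟩ := hKL C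
  obtain ⟨k, hk⟩ := pow_unbounded_of_one_lt
    (2 * (m : ℝ) ^ L * Mlm / (ε * Real.log 2)) hm1R
  filter_upwards [Filter.eventually_ge_atTop (k + 1)] with N hN
  have hN1 : 1 ≤ N := by omega
  -- F3
  have h5 : (m : ℝ) ^ k ≤ (m : ℝ) ^ (N - 1) :=
    pow_le_pow_right₀ (le_of_lt hm1R) (by omega)
  have F3 : 2 * (m : ℝ) ^ L * Mlm ≤ ε * Real.log 2 * (m : ℝ) ^ (N - 1) := by
    have h6 : 2 * (m : ℝ) ^ L * Mlm / (ε * Real.log 2) ≤ (m : ℝ) ^ (N - 1) :=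
      le_trans hk.le h5
    rw [div_le_iff₀ hεl] at h6
    linarith
  -- natural number bound
  set SN : ℕ := (TN z' N).card with hSNdef
  have hA : C * SN ≤ C * m ^ L + m ^ N := SN_bound hm hGW hz'W hKLC
  -- numerator
  haveI : Finite (Qn G N) := Qn_finite hGW N
  have hrXcard : (levelStab m N).relIndex G = Nat.card (Qn G N) := relindex_eq_card G N
  have hrXpos : 0 < (levelStab m N).relIndex G := by
    rw [hrXcard]; exact Nat.card_pos
  have hnum : (levelStab m N).relIndex G ≤ (m ^ m) ^ SN := by
    rw [hrXcard]; exact numer_bound hGW hss hz'G hz'c N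
  have h1 : Real.log ((levelStab m N).relIndex G) ≤ (SN : ℝ) * Mlm := by
    have hcast : ((levelStab m N).relIndex G : ℝ) ≤ (((m ^ m) ^ SN : ℕ) : ℝ) := by
      exact_mod_cast hnum
    have hlog := Real.log_le_log (by exact_mod_cast hrXpos) hcast
    refine le_trans hlog (le_of_eq ?_)
    have : (((m ^ m) ^ SN : ℕ) : ℝ) = ((m : ℝ) ^ m) ^ SN := by push_cast; ring
    rw [this, Real.log_pow, Real.log_pow, hMlmdef]
  -- denominator
  have hrWcard : (levelStab m N).relIndex (wreath m H) = Nat.card (Qn (wreath m H) N) :=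
    relindex_eq_card _ N
  have hden : 2 ^ m ^ (N - 1) ≤ (levelStab m N).relIndex (wreath m H) := by
    rw [hrWcard]; exact denom_bound hN1 hσ₀H hσ₀1
  have h2 : (m : ℝ) ^ (N - 1) * Real.log 2 ≤
      Real.log ((levelStab m N).relIndex (wreath m H)) := by
    have hcast : ((2 ^ m ^ (N - 1) : ℕ) : ℝ) ≤ ((levelStab m N).relIndex (wreath m H) : ℝ) := by
      exact_mod_cast hden
    have hlog := Real.log_le_log (by positivity) hcast
    refine le_trans ?_ hlog
    have : ((2 ^ m ^ (N - 1) : ℕ) : ℝ) = (2 : ℝ) ^ (m ^ (N - 1) : ℕ) := by push_cast; ring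
    rw [this, Real.log_pow]
    have : ((m ^ (N - 1) : ℕ) : ℝ) = (m : ℝ) ^ (N - 1) := by push_cast; ring
    rw [this]
  have h3 : 0 < Real.log ((levelStab m N).relIndex (wreath m H)) :=
    lt_of_lt_of_le (by positivity) h2
  rw [div_le_iff₀ h3]
  -- key real inequality
  have F1 : (C : ℝ) * (SN : ℝ) ≤ (C : ℝ) * (m : ℝ) ^ L + (m : ℝ) ^ N := by
    exact_mod_cast hA
  have F4 : (m : ℝ) ^ N = (m : ℝ) * (m : ℝ) ^ (N - 1) := by
    have hNe : N - 1 + 1 = N := by omega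
    calc (m : ℝ) ^ N = (m : ℝ) ^ (N - 1 + 1) := by rw [hNe]
    _ = (m : ℝ) ^ (N - 1) * m := pow_succ _ _
    _ = (m : ℝ) * (m : ℝ) ^ (N - 1) := by ring
  have hpowpos : (0 : ℝ) ≤ (m : ℝ) ^ (N - 1) := by positivity
  have G1 : (C : ℝ) * ((SN : ℝ) * Mlm) ≤
      ((C : ℝ) * (m : ℝ) ^ L) * Mlm + (m : ℝ) ^ N * Mlm := by
    calc (C : ℝ) * ((SN : ℝ) * Mlm) = ((C : ℝ) * (SN : ℝ)) * Mlm := by ring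
    _ ≤ ((C : ℝ) * (m : ℝ) ^ L + (m : ℝ) ^ N) * Mlm := mul_le_mul_of_nonneg_right F1 hMlm
    _ = ((C : ℝ) * (m : ℝ) ^ L) * Mlm + (m : ℝ) ^ N * Mlm := by ring
  have G2 : 2 * ((C : ℝ) * (m : ℝ) ^ L * Mlm) ≤
      (C : ℝ) * (ε * Real.log 2 * (m : ℝ) ^ (N - 1)) := by
    calc 2 * ((C : ℝ) * (m : ℝ) ^ L * Mlm) = (C : ℝ) * (2 * (m : ℝ) ^ L * Mlm) := by ring
    _ ≤ (C : ℝ) * (ε * Real.log 2 * (m : ℝ) ^ (N - 1)) :=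
        mul_le_mul_of_nonneg_left F3 hC0R.le
  have G3 : 2 * ((m : ℝ) ^ N * Mlm) ≤
      (C : ℝ) * (ε * Real.log 2 * (m : ℝ) ^ (N - 1)) := by
    have h7 := mul_le_mul_of_nonneg_right F2 hpowpos
    calc 2 * ((m : ℝ) ^ N * Mlm) = (2 * (m : ℝ) * Mlm) * (m : ℝ) ^ (N - 1) := by
          rw [F4]; ring
    _ ≤ (ε * Real.log 2 * (C : ℝ)) * (m : ℝ) ^ (N - 1) := h7
    _ = (C : ℝ) * (ε * Real.log 2 * (m : ℝ) ^ (N - 1)) := by ring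
  have G4 : (C : ℝ) * ((SN : ℝ) * Mlm) ≤
      (C : ℝ) * (ε * ((m : ℝ) ^ (N - 1) * Real.log 2)) := by
    have hT : (C : ℝ) * (ε * Real.log 2 * (m : ℝ) ^ (N - 1))
        = (C : ℝ) * (ε * ((m : ℝ) ^ (N - 1) * Real.log 2)) := by ring
    linarith
  have key : (SN : ℝ) * Mlm ≤ ε * ((m : ℝ) ^ (N - 1) * Real.log 2) :=
    le_of_mul_le_mul_left G4 hC0R
  have final : ε * ((m : ℝ) ^ (N - 1) * Real.log 2) ≤
      ε * Real.log ((levelStab m N).relIndex (wreath m H)) :=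
    mul_le_mul_of_nonneg_left h2 hε.le
  linarith

end S6

/-- A closed, self-similar, level-transitive subgroup `G ≤ W_H` with
positive Hausdorff dimension in `W_H` has trivial center.  Consequently, a group with
non-trivial center admits no faithful realization (no injective homomorphism with image `G`)
as such a subgroup. -/
theorem statement6 (m : ℕ) (hm : 2 ≤ m) (H : Subgroup (Equiv.Perm (Fin m)))
    (G : Subgroup (Equiv.Perm (Vtx m))) (hGW : G ≤ wreath m H) (hGcl : IsTreeClosed m G)
    (hss : SelfSimilar m G) (hlt : LevelTransitive m G)
    (hpos : 0 < hdimIn m (wreath m H) G) :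
    (∀ g ∈ G, (∀ x ∈ G, g * x = x * g) → g = 1) ∧
    (∀ (P : Type) [Group P], (∃ p : P, p ≠ 1 ∧ ∀ q : P, p * q = q * p) →
      ∀ φ : P →* Equiv.Perm (Vtx m), Function.Injective φ → φ.range ≠ G) := by

  have key : ∀ g ∈ G, (∀ x ∈ G, g * x = x * g) → g = 1 := by
    intro z hzG hzc
    by_contra hz1
    -- a nontrivial element of H exists
    have hσ : ∃ σ₀ ∈ H, σ₀ ≠ 1 := by
      by_contra hcon
      push_neg at hcon
      apply hz1
      apply Equiv.ext
      intro w
      induction w using List.reverseRecOn with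
      | nil => exact S6.wr_nil (hGW hzG)
      | append_singleton v x ih =>
        obtain ⟨σ, hσH, hσ'⟩ := (hGW hzG).2 v
        rw [hσ' x, ih, hcon σ hσH]
        simp
    obtain ⟨σ₀, hσ₀H, hσ₀1⟩ := hσ
    obtain ⟨z', hz'G, hz'c, hz'1, hKL⟩ := S6.exists_good hGW hlt hzG hzc hz1
    -- the dimension is zero
    have hup : ∀ ε : ℝ, 0 < ε → hdimIn m (wreath m H) G ≤ ε := by
      intro ε hε
      have hev := S6.eps_bound hm hGW hss hz'G hz'c hKL hσ₀H hσ₀1 hε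
      refine Filter.liminf_le_of_frequently_le hev.frequently ?_
      refine Filter.isBoundedUnder_of ⟨0, fun N => ?_⟩
      exact div_nonneg (S6.lognat_nonneg _) (S6.lognat_nonneg _)
    have := hup (hdimIn m (wreath m H) G / 2) (by linarith)
    linarith
  refine ⟨key, ?_⟩
  intro P _ hp φ hφ hrange
  obtain ⟨p, hp1, hpc⟩ := hp
  have hφp : φ p ∈ G := by
    rw [← hrange]
    exact ⟨p, rfl⟩
  have hcent : ∀ x ∈ G, φ p * x = x * φ p := by
    intro x hx
    rw [← hrange] at hx
    obtain ⟨q, rfl⟩ := hx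
    rw [← map_mul, ← map_mul, hpc q]
  exact hp1 (hφ (by rw [key _ hφp hcent, map_one]))
end

section
/- Let m ≥ 2, let H ≤ Sym(m) be transitive, and let K be a non-trivial closed subgroup of the iterated wreath product W_H. Let G_K = ⟨H, D_m(K)⟩, where H acts by rooted automorphisms and D_m(K) is the preimage under the first-level section map ψ of the diagonal copy {(k,…,k) : k ∈ K}. Then the center of G_K is isomorphic to Z(H) × Z(K); in particular, if Z(H) ≠ 1 then G_K has non-trivial center. -/
open Filter Topology

/-- The diagonal automorphism associated to `k`: acts by `k` on the tail, fixing first letter. -/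
def diagPerm (m : ℕ) (k : Equiv.Perm (Vtx m)) : Equiv.Perm (Vtx m) where
  toFun v := match v with
    | [] => []
    | x :: u => x :: k u
  invFun v := match v with
    | [] => []
    | x :: u => x :: k⁻¹ u
  left_inv v := by cases v with
    | nil => rfl
    | cons x u => simp
  right_inv v := by cases v with
    | nil => rfl
    | cons x u => simp

/-- The diagonal embedding as a group homomorphism. -/
def diagHom (m : ℕ) : Equiv.Perm (Vtx m) →* Equiv.Perm (Vtx m) where
  toFun := diagPerm m
  map_one' := by
    ext v
    cases v <;> rfl
  map_mul' k k' := by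
    ext v
    cases v <;> rfl

lemma diagSub_eq_map (m : ℕ) (K : Subgroup (Equiv.Perm (Vtx m))) :
    diagSub m K = K.map (diagHom m) := by
  ext f
  constructor
  · rintro ⟨h0, k, hk, hf⟩
    refine ⟨k, hk, Equiv.ext fun v => ?_⟩
    cases v with
    | nil => exact h0.symm
    | cons x u => exact (hf x u).symm
  · rintro ⟨k, hk, rfl⟩
    exact ⟨rfl, k, hk, fun x u => rfl⟩

/-- The combined embedding `(σ, k) ↦ rooted σ * diag k`. -/
def rdHom (m : ℕ) : Equiv.Perm (Fin m) × Equiv.Perm (Vtx m) →* Equiv.Perm (Vtx m) where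
  toFun p := rootedPerm m p.1 * diagPerm m p.2
  map_one' := by
    ext v
    cases v <;> rfl
  map_mul' p q := by
    ext v
    cases v <;> rfl

lemma rdHom_inj (m : ℕ) (hm : 2 ≤ m) : Function.Injective (rdHom m) := by
  rw [injective_iff_map_eq_one]
  rintro ⟨σ, k⟩ h
  have key : ∀ (x : Fin m) (u : Vtx m), σ x = x ∧ k u = u := by
    intro x u
    have := congrFun (congrArg (fun e : Equiv.Perm (Vtx m) => (e : Vtx m → Vtx m)) h) (x :: u)
    have h2 : σ x :: k u = x :: u := this
    exact ⟨List.head_eq_of_cons_eq h2, List.tail_eq_of_cons_eq h2⟩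
  have h0 : (0 : ℕ) < m := by omega
  refine Prod.ext (Equiv.ext fun x => (key x []).1) (Equiv.ext fun u => (key ⟨0, h0⟩ u).2)

lemma diagGroup_eq_map (m : ℕ) (H : Subgroup (Equiv.Perm (Fin m)))
    (K : Subgroup (Equiv.Perm (Vtx m))) :
    diagGroup m H K = (H.prod K).map (rdHom m) := by
  apply le_antisymm
  · rw [diagGroup]
    apply sup_le
    · rintro f ⟨σ, hσ, rfl⟩
      refine ⟨(σ, 1), ⟨hσ, K.one_mem⟩, ?_⟩
      show rootedPerm m σ * diagPerm m 1 = rootedPerm m σ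
      ext v; cases v <;> rfl
    · rw [diagSub_eq_map]
      rintro f ⟨k, hk, rfl⟩
      refine ⟨(1, k), ⟨H.one_mem, hk⟩, ?_⟩
      show rootedPerm m 1 * diagPerm m k = diagPerm m k
      ext v; cases v <;> rfl
  · rintro f ⟨⟨σ, k⟩, ⟨hσ, hk⟩, rfl⟩
    exact mul_mem (Subgroup.mem_sup_left ⟨σ, hσ, rfl⟩)
      (Subgroup.mem_sup_right (by rw [diagSub_eq_map]; exact ⟨k, hk, rfl⟩))

lemma centerOf_map {X Y : Type*} [Group X] [Group Y] (f : X →* Y)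
    (hf : Function.Injective f) (G : Subgroup X) :
    centerOf (G.map f) = (centerOf G).map f := by
  ext y
  simp only [centerOf, Subgroup.mem_inf, Subgroup.mem_map, Subgroup.mem_centralizer_iff,
    SetLike.mem_coe]
  constructor
  · rintro ⟨hc, x, hx, rfl⟩
    refine ⟨x, ⟨fun g hg => hf ?_, hx⟩, rfl⟩
    have := hc (f g) ⟨g, hg, rfl⟩
    simpa [map_mul] using this
  · rintro ⟨x, ⟨hc, hx⟩, rfl⟩
    refine ⟨?_, x, hx, rfl⟩
    rintro y ⟨g, hg, rfl⟩
    rw [← map_mul, ← map_mul, hc g hg]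

lemma centerOf_prod {X Y : Type*} [Group X] [Group Y] (G : Subgroup X) (H : Subgroup Y) :
    centerOf (G.prod H) = (centerOf G).prod (centerOf H) := by
  ext ⟨x, y⟩
  simp only [centerOf, Subgroup.mem_inf, Subgroup.mem_prod, Subgroup.mem_centralizer_iff,
    SetLike.mem_coe]
  constructor
  · rintro ⟨hc, hx, hy⟩
    refine ⟨⟨fun g hg => ?_, hx⟩, ⟨fun h hh => ?_, hy⟩⟩
    · have := hc (g, 1) ⟨hg, H.one_mem⟩
      exact congrArg Prod.fst this
    · have := hc (1, h) ⟨G.one_mem, hh⟩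
      exact congrArg Prod.snd this
  · rintro ⟨⟨hcx, hx⟩, ⟨hcy, hy⟩⟩
    refine ⟨?_, hx, hy⟩
    rintro ⟨g, h⟩ ⟨hg, hh⟩
    exact Prod.ext (hcx g hg) (hcy h hh)

/-- For `H ≤ Sym(m)` transitive and `1 ≠ K ≤ W_H` closed, the center of
`G_K = ⟨H, D_m(K)⟩` is isomorphic to `Z(H) × Z(K)`; in particular if `Z(H) ≠ 1` then `G_K`
has non-trivial center. -/
theorem statement10 (m : ℕ) (hm : 2 ≤ m) (H : Subgroup (Equiv.Perm (Fin m)))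
    (hHtrans : ∀ x y : Fin m, ∃ σ ∈ H, σ x = y)
    (K : Subgroup (Equiv.Perm (Vtx m))) (hKW : K ≤ wreath m H) (hKcl : IsTreeClosed m K)
    (hKne : K ≠ ⊥) :
    Nonempty (↥(centerOf (diagGroup m H K)) ≃* ↥(centerOf H) × ↥(centerOf K)) ∧
    (centerOf H ≠ ⊥ → centerOf (diagGroup m H K) ≠ ⊥) := by
  have hinj := rdHom_inj m hm
  have key : centerOf (diagGroup m H K) = ((centerOf H).prod (centerOf K)).map (rdHom m) := by
    rw [diagGroup_eq_map, centerOf_map _ hinj, centerOf_prod]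
  constructor
  · exact ⟨(MulEquiv.subgroupCongr key).trans
      (((Subgroup.equivMapOfInjective _ _ hinj).symm).trans (Subgroup.prodEquiv _ _))⟩
  · intro hH hbot
    rw [key, Subgroup.map_eq_bot_iff_of_injective _ hinj, Subgroup.prod_eq_bot_iff] at hbot
    exact hH hbot.1
end
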